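/- Let ‖·‖ be a norm on E with dual norm ‖v‖_* := sup{⟨v, x⟩ : ‖x‖ ≤ 1}, let d be 1-strongly convex with respect to ‖·‖ (V[y](x) ≥ (1/2)·‖x − y‖² for all x, y ∈ Q), let ν ∈ [0, 1], L_ν > 0, and let g : Q → E satisfy the Hölder condition ‖g(x) − g(y)‖_* ≤ L_ν·‖x − y‖^ν for all x, y ∈ Q. Then for every δ > 0 and all x, y, z ∈ Q: ⟨g(z) − g(y), z − x⟩ ≤ L(δ)·V[z](x) + L(δ)·V[y](z) + δ, where L(δ) := (1/(2·δ))^{(1−ν)/(1+ν)} · L_ν^{2/(1+ν)}. -/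

import Mathlib

open RealInnerProductSpace

/-- The Bregman divergence `V[y](x) = d(x) - d(y) - ⟪∇d(y), x - y⟫` generated by `d`
with gradient map `Dd`. -/
noncomputable def breg {E : Type*} [NormedAddCommGroup E] [InnerProductSpace ℝ E]
    (d : E → ℝ) (Dd : E → E) (y x : E) : ℝ :=
  d x - d y - ⟪Dd y, x - y⟫

lemma key_scalar (ν L δ a b : ℝ) (hν0 : 0 ≤ ν) (hν1 : ν ≤ 1) (hL : 0 < L) (hδ : 0 < δ)
    (ha : 0 ≤ a) (hb : 0 ≤ b) :
    L * a ^ ν * b ≤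
      (1 / (2 * δ)) ^ ((1 - ν) / (1 + ν)) * L ^ (2 / (1 + ν)) / 2 * a ^ 2
        + (1 / (2 * δ)) ^ ((1 - ν) / (1 + ν)) * L ^ (2 / (1 + ν)) / 2 * b ^ 2 + δ := by
  have hν1' : (0:ℝ) < 1 + ν := by linarith
  set M : ℝ := (1 / (2 * δ)) ^ ((1 - ν) / (1 + ν)) * L ^ (2 / (1 + ν)) with hMdef
  have hM : 0 < M := by
    apply mul_pos <;> apply Real.rpow_pos_of_pos <;> positivity
  have hsb : (0:ℝ) < 2 * δ / L := by positivity
  set s : ℝ := (2 * δ / L) ^ (2 / (1 + ν)) with hsdef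
  have hs : 0 < s := Real.rpow_pos_of_pos hsb _
  -- identity 1 : L^2 * s^(ν-1) = M^2
  have hI1 : L ^ (2:ℕ) * s ^ (ν - 1) = M ^ (2:ℕ) := by
    have h1 : (0:ℝ) < L ^ (2:ℕ) * s ^ (ν - 1) := by
      have := Real.rpow_pos_of_pos hs (ν - 1); positivity
    have h2 : (0:ℝ) < M ^ (2:ℕ) := by positivity
    apply Real.log_injOn_pos (Set.mem_Ioi.mpr h1) (Set.mem_Ioi.mpr h2)
    rw [Real.log_mul (by positivity) (by positivity), Real.log_pow, Real.log_pow,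
      Real.log_rpow hs, hsdef, Real.log_rpow hsb, hMdef,
      Real.log_mul (by positivity) (by positivity), Real.log_rpow (by positivity),
      Real.log_rpow hL, Real.log_div (by positivity) (by positivity),
      Real.log_div (by norm_num) (by positivity)]
    push_cast
    field_simp
    simp only [Real.log_one] <;> ring
  -- identity 2 : L^2 * s^ν = 2 * M * δ
  have hI2 : L ^ (2:ℕ) * s ^ ν = 2 * M * δ := by
    have h1 : (0:ℝ) < L ^ (2:ℕ) * s ^ ν := by
      have := Real.rpow_pos_of_pos hs ν; positivity
    apply Real.log_injOn_pos (Set.mem_Ioi.mpr h1) (Set.mem_Ioi.mpr (by positivity))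
    rw [Real.log_mul (by positivity) (by positivity), Real.log_pow,
      Real.log_rpow hs, hsdef, Real.log_rpow hsb, hMdef,
      Real.log_mul (by positivity) hδ.ne',
      Real.log_mul (by norm_num) (by positivity),
      Real.log_mul (by positivity) (by positivity),
      Real.log_rpow (by positivity), Real.log_rpow hL,
      Real.log_div (by positivity) (by positivity),
      Real.log_div (by norm_num) (by positivity),
      Real.log_mul (by norm_num) hδ.ne']
    push_cast
    field_simp
    simp only [Real.log_one] <;> ring
  -- step 2 : L^2 * a^(2ν) ≤ M^2 * a^2 + 2*M*δ
  have hgm : (a ^ (2:ℕ)) ^ ν * s ^ (1 - ν) ≤ ν * a ^ (2:ℕ) + (1 - ν) * s :=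
    Real.geom_mean_le_arith_mean2_weighted hν0 (by linarith) (by positivity) hs.le
      (by ring)
  have hsplit : s ^ (ν - 1) * s ^ (1 - ν) = 1 := by
    rw [← Real.rpow_add hs]; norm_num
  have hspos : (0:ℝ) < s ^ (1 - ν) := Real.rpow_pos_of_pos hs _
  have hsν : s ^ (ν - 1) * s = s ^ ν := by
    nth_rewrite 2 [← Real.rpow_one s]
    rw [← Real.rpow_add hs]; ring_nf
  have hstep2 : L ^ (2:ℕ) * (a ^ (2:ℕ)) ^ ν ≤ M ^ (2:ℕ) * a ^ (2:ℕ) + 2 * M * δ := by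
    have h3 : (a ^ (2:ℕ)) ^ ν ≤ ν * a ^ (2:ℕ) * s ^ (ν - 1) + (1 - ν) * s ^ ν := by
      have h4 : (a ^ (2:ℕ)) ^ ν * (s ^ (ν - 1) * s ^ (1 - ν)) ≤
          (ν * a ^ (2:ℕ) + (1 - ν) * s) * s ^ (ν - 1) := by
        calc (a ^ (2:ℕ)) ^ ν * (s ^ (ν - 1) * s ^ (1 - ν))
            = ((a ^ (2:ℕ)) ^ ν * s ^ (1 - ν)) * s ^ (ν - 1) := by ring
          _ ≤ (ν * a ^ (2:ℕ) + (1 - ν) * s) * s ^ (ν - 1) := by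
              apply mul_le_mul_of_nonneg_right hgm (Real.rpow_pos_of_pos hs _).le
      rw [hsplit, mul_one] at h4
      calc (a ^ (2:ℕ)) ^ ν ≤ (ν * a ^ (2:ℕ) + (1 - ν) * s) * s ^ (ν - 1) := h4
        _ = ν * a ^ (2:ℕ) * s ^ (ν - 1) + (1 - ν) * (s ^ (ν - 1) * s) := by ring
        _ = ν * a ^ (2:ℕ) * s ^ (ν - 1) + (1 - ν) * s ^ ν := by rw [hsν]
    have h5 : L ^ (2:ℕ) * (a ^ (2:ℕ)) ^ ν ≤
        ν * (L ^ (2:ℕ) * s ^ (ν - 1)) * a ^ (2:ℕ) + (1 - ν) * (L ^ (2:ℕ) * s ^ ν) := by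
      have := mul_le_mul_of_nonneg_left h3 (by positivity : (0:ℝ) ≤ L ^ (2:ℕ))
      calc L ^ (2:ℕ) * (a ^ (2:ℕ)) ^ ν
          ≤ L ^ (2:ℕ) * (ν * a ^ (2:ℕ) * s ^ (ν - 1) + (1 - ν) * s ^ ν) := this
        _ = ν * (L ^ (2:ℕ) * s ^ (ν - 1)) * a ^ (2:ℕ) + (1 - ν) * (L ^ (2:ℕ) * s ^ ν) := by
            ring
    rw [hI1, hI2] at h5
    nlinarith [h5, mul_nonneg (mul_nonneg (by linarith : (0:ℝ) ≤ 1 - ν) (sq_nonneg M)) (sq_nonneg a),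
      mul_nonneg hν0 (mul_nonneg hM.le hδ.le)]
  -- a^(2ν) = (a^2)^ν
  have hrw : (a ^ (2:ℕ)) ^ ν = (a ^ ν) ^ (2:ℕ) := by
    rw [← Real.rpow_natCast a 2, ← Real.rpow_natCast (a ^ ν) 2,
      ← Real.rpow_mul ha, ← Real.rpow_mul ha]
    norm_num; ring_nf
  rw [hrw] at hstep2
  -- step 1 + conclude
  have hmain : 2 * M * (L * a ^ ν * b) ≤ 2 * M * (M / 2 * a ^ 2 + M / 2 * b ^ 2 + δ) := by
    nlinarith [sq_nonneg (L * a ^ ν - M * b), hstep2, hM]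
  have := (mul_le_mul_iff_right₀ (by positivity : (0:ℝ) < 2 * M)).mp hmain
  calc L * a ^ ν * b ≤ M / 2 * a ^ 2 + M / 2 * b ^ 2 + δ := this
    _ = M / 2 * a ^ 2 + M / 2 * b ^ 2 + δ := rfl

lemma norm_bound {E : Type*} [NormedAddCommGroup E] [InnerProductSpace ℝ E]
    [FiniteDimensional ℝ E]
    (nrm : E → ℝ)
    (hn_add : ∀ x y : E, nrm (x + y) ≤ nrm x + nrm y)
    (hn_smul : ∀ (a : ℝ) (x : E), nrm (a • x) = |a| * nrm x)
    (hn_pos : ∀ x : E, x ≠ 0 → 0 < nrm x) :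
    ∃ c : ℝ, ∀ x : E, nrm x ≤ 1 → ‖x‖ ≤ c := by
  by_cases hE : Nontrivial E
  · -- nrm is continuous : nrm x ≤ C * ‖x‖
    have hn0 : nrm 0 = 0 := by simpa using hn_smul 0 0
    have hneg : ∀ x : E, nrm (-x) = nrm x := by
      intro x; have := hn_smul (-1) x; simpa using this
    have hnonneg : ∀ x : E, 0 ≤ nrm x := by
      intro x
      have h1 := hn_add x (-x)
      rw [add_neg_cancel, hn0, hneg] at h1
      linarith
    obtain ⟨C, hC⟩ : ∃ C : ℝ, ∀ x : E, nrm x ≤ C * ‖x‖ := by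
      set b := Module.finBasis ℝ E
      have hsum : ∀ (s : Finset (Fin (Module.finrank ℝ E))) (f : Fin (Module.finrank ℝ E) → E),
          nrm (∑ i ∈ s, f i) ≤ ∑ i ∈ s, nrm (f i) := by
        intro s
        induction s using Finset.induction with
        | empty => intro f; simp [hn0]
        | insert a s hns ih =>
          intro f
          rw [Finset.sum_insert hns, Finset.sum_insert hns]
          exact le_trans (hn_add _ _) (by linarith [ih f])
      refine ⟨∑ i, ‖(b.coord i).toContinuousLinearMap‖ * nrm (b i), fun x => ?_⟩
      calc nrm x = nrm (∑ i, b.repr x i • b i) := by rw [b.sum_repr x]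
        _ ≤ ∑ i, nrm (b.repr x i • b i) := hsum _ _
        _ = ∑ i, |b.repr x i| * nrm (b i) := by simp [hn_smul]
        _ ≤ ∑ i, (‖(b.coord i).toContinuousLinearMap‖ * ‖x‖) * nrm (b i) := by
            apply Finset.sum_le_sum
            intro i _
            apply mul_le_mul_of_nonneg_right _ (hnonneg _)
            have h := (b.coord i).toContinuousLinearMap.le_opNorm x
            simpa [Real.norm_eq_abs] using h
        _ = (∑ i, ‖(b.coord i).toContinuousLinearMap‖ * nrm (b i)) * ‖x‖ := by
            rw [Finset.sum_mul]; congr 1; ext i; ring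
    have hCnn : 0 ≤ C := by
      obtain ⟨x, hx⟩ := exists_ne (0 : E)
      have h1 := (hn_pos x hx).trans_le (hC x)
      have hxp : 0 < ‖x‖ := norm_pos_iff.mpr hx
      nlinarith
    have hcont : Continuous nrm := by
      rw [Metric.continuous_iff]
      intro x ε hε
      by_cases hC0 : C = 0
      · refine ⟨1, one_pos, fun y _ => ?_⟩
        have h1 : nrm y ≤ 0 := by simpa [hC0] using hC y
        have h2 : nrm x ≤ 0 := by simpa [hC0] using hC x
        have := hnonneg y; have := hnonneg x
        simp only [Real.dist_eq]
        have : nrm y = 0 := le_antisymm h1 (hnonneg y)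
        have : nrm x = 0 := le_antisymm h2 (hnonneg x)
        simp_all
      · have hCpos : 0 < C := lt_of_le_of_ne hCnn (Ne.symm hC0)
        refine ⟨ε / C, by positivity, fun y hy => ?_⟩
        rw [Real.dist_eq, abs_lt]
        have h1 : nrm y ≤ nrm (y - x) + nrm x := by
          have := hn_add (y - x) x; simpa using this
        have h2 : nrm x ≤ nrm (x - y) + nrm y := by
          have := hn_add (x - y) y; simpa using this
        have h3 : nrm (y - x) ≤ C * ‖y - x‖ := hC _
        have h4 : nrm (x - y) = nrm (y - x) := by rw [← hneg (y - x)]; congr 1; abel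
        have h5 : ‖y - x‖ < ε / C := by rwa [dist_eq_norm] at hy
        have h6 : C * ‖y - x‖ < ε := by
          have := mul_lt_mul_of_pos_left h5 hCpos
          rwa [mul_div_cancel₀ _ hC0] at this
        constructor <;> nlinarith
    -- min on the sphere
    have hsph : (Metric.sphere (0:E) 1).Nonempty :=
      NormedSpace.sphere_nonempty.mpr zero_le_one
    obtain ⟨x₀, hx₀, hmin⟩ :=
      (isCompact_sphere (0:E) 1).exists_isMinOn hsph hcont.continuousOn
    have hx₀n : ‖x₀‖ = 1 := by simpa using hx₀
    have hm : 0 < nrm x₀ := hn_pos x₀ (by intro h; rw [h] at hx₀n; simp at hx₀n)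
    refine ⟨1 / nrm x₀, fun x hx => ?_⟩
    by_cases hx0 : x = 0
    · simp [hx0]; positivity
    · have hxn : 0 < ‖x‖ := norm_pos_iff.mpr hx0
      have hmem : (‖x‖⁻¹ • x) ∈ Metric.sphere (0:E) 1 := by
        simp [norm_smul, abs_of_pos (inv_pos.mpr hxn), inv_mul_cancel₀ hxn.ne']
      have h1 : nrm x₀ ≤ nrm (‖x‖⁻¹ • x) := hmin hmem
      rw [hn_smul, abs_of_pos (inv_pos.mpr hxn)] at h1
      rw [le_div_iff₀ hm]
      calc ‖x‖ * nrm x₀ ≤ ‖x‖ * (‖x‖⁻¹ * nrm x) := by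
            apply mul_le_mul_of_nonneg_left h1 hxn.le
        _ = nrm x := by field_simp
        _ ≤ 1 := hx
  · rw [not_nontrivial_iff_subsingleton] at hE
    exact ⟨0, fun x _ => by rw [Subsingleton.elim x 0]; simp⟩

/-- Example 4.13: a monotone operator with Hölder continuous values
(w.r.t. a norm `nrm` with dual norm `dnrm`, for a `1`-strongly convex `d`) admits the
inexact relative smoothness inequality with constant
`L(δ) = (1/(2δ))^((1−ν)/(1+ν)) · L_ν^(2/(1+ν))`. -/

theorem stmt16
    {E : Type*} [NormedAddCommGroup E] [InnerProductSpace ℝ E] [FiniteDimensional ℝ E]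
    (Q : Set E) (hQ : Convex ℝ Q)
    (d : E → ℝ) (Dd : E → E)
    (hd_conv : ConvexOn ℝ Set.univ d) (hd_diff : ∀ x, HasGradientAt d (Dd x) x)
    (nrm : E → ℝ)
    (hn_add : ∀ x y : E, nrm (x + y) ≤ nrm x + nrm y)
    (hn_smul : ∀ (a : ℝ) (x : E), nrm (a • x) = |a| * nrm x)
    (hn_pos : ∀ x : E, x ≠ 0 → 0 < nrm x)
    (dnrm : E → ℝ)
    (hdnrm : ∀ v : E, dnrm v = sSup {r : ℝ | ∃ x : E, nrm x ≤ 1 ∧ r = ⟪v, x⟫})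
    (hsc : ∀ x ∈ Q, ∀ y ∈ Q, 1 / 2 * nrm (x - y) ^ 2 ≤ breg d Dd y x)
    (ν Lν : ℝ) (hν0 : 0 ≤ ν) (hν1 : ν ≤ 1) (hLν : 0 < Lν)
    (g : E → E)
    (hHolder : ∀ x ∈ Q, ∀ y ∈ Q, dnrm (g x - g y) ≤ Lν * nrm (x - y) ^ ν) :
    ∀ δ : ℝ, 0 < δ → ∀ x ∈ Q, ∀ y ∈ Q, ∀ z ∈ Q,
      ⟪g z - g y, z - x⟫ ≤
        (1 / (2 * δ)) ^ ((1 - ν) / (1 + ν)) * Lν ^ (2 / (1 + ν)) * breg d Dd z x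
          + (1 / (2 * δ)) ^ ((1 - ν) / (1 + ν)) * Lν ^ (2 / (1 + ν)) * breg d Dd y z + δ := by
  intro δ hδ x hx y hy z hz
  have hn0 : nrm 0 = 0 := by simpa using hn_smul 0 0
  have hneg : ∀ u : E, nrm (-u) = nrm u := by
    intro u; have := hn_smul (-1) u; simpa using this
  have hnonneg : ∀ u : E, 0 ≤ nrm u := by
    intro u
    have h1 := hn_add u (-u)
    rw [add_neg_cancel, hn0, hneg] at h1
    linarith
  set v : E := g z - g y with hv
  set w : E := z - x with hw
  -- step 1 : generalized Cauchy–Schwarz for the pair (dnrm, nrm)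
  have hinner : ⟪v, w⟫ ≤ dnrm v * nrm w := by
    by_cases hw0 : w = 0
    · simp [hw0, hn0]
    · have hwpos : 0 < nrm w := hn_pos w hw0
      obtain ⟨c, hc⟩ := norm_bound nrm hn_add hn_smul hn_pos
      have hbdd : BddAbove {r : ℝ | ∃ u : E, nrm u ≤ 1 ∧ r = ⟪v, u⟫} := by
        refine ⟨‖v‖ * c, ?_⟩
        rintro r ⟨u, hu, rfl⟩
        calc ⟪v, u⟫ ≤ ‖v‖ * ‖u‖ := real_inner_le_norm v u
          _ ≤ ‖v‖ * c := mul_le_mul_of_nonneg_left (hc u hu) (norm_nonneg v)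
      set u : E := (nrm w)⁻¹ • w with hu
      have hu1 : nrm u = 1 := by
        rw [hu, hn_smul, abs_of_pos (inv_pos.mpr hwpos), inv_mul_cancel₀ hwpos.ne']
      have h1 : ⟪v, u⟫ ≤ dnrm v := by
        rw [hdnrm]
        exact le_csSup hbdd ⟨u, hu1.le, rfl⟩
      have hwu : w = (nrm w) • u := by
        rw [hu, smul_smul, mul_inv_cancel₀ hwpos.ne', one_smul]
      calc ⟪v, w⟫ = ⟪v, (nrm w) • u⟫ := by rw [← hwu]
        _ = nrm w * ⟪v, u⟫ := real_inner_smul_right v u (nrm w)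
        _ ≤ nrm w * dnrm v := mul_le_mul_of_nonneg_left h1 hwpos.le
        _ = dnrm v * nrm w := mul_comm _ _
  -- step 2 : Hölder continuity
  have hH : dnrm v ≤ Lν * nrm (z - y) ^ ν := hHolder z hz y hy
  have h3 : ⟪v, w⟫ ≤ Lν * nrm (z - y) ^ ν * nrm w :=
    hinner.trans (mul_le_mul_of_nonneg_right hH (hnonneg w))
  -- step 3 : key scalar inequality
  have hkey := key_scalar ν Lν δ (nrm (z - y)) (nrm w) hν0 hν1 hLν hδ
    (hnonneg _) (hnonneg _)
  set M : ℝ := (1 / (2 * δ)) ^ ((1 - ν) / (1 + ν)) * Lν ^ (2 / (1 + ν)) with hM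
  have hMpos : 0 < M := by
    apply mul_pos <;> apply Real.rpow_pos_of_pos <;> positivity
  -- step 4 : strong convexity
  have hsc1 : 1 / 2 * nrm w ^ 2 ≤ breg d Dd z x := by
    have hx1 := hsc x hx z hz
    have : nrm (x - z) = nrm w := by
      rw [hw, ← hneg (x - z), neg_sub]
    rwa [this] at hx1
  have hsc2 : 1 / 2 * nrm (z - y) ^ 2 ≤ breg d Dd y z := hsc z hz y hy
  have hb1 : M / 2 * nrm w ^ 2 ≤ M * breg d Dd z x := by
    have := mul_le_mul_of_nonneg_left hsc1 hMpos.le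
    calc M / 2 * nrm w ^ 2 = M * (1 / 2 * nrm w ^ 2) := by ring
      _ ≤ M * breg d Dd z x := this
  have hb2 : M / 2 * nrm (z - y) ^ 2 ≤ M * breg d Dd y z := by
    have := mul_le_mul_of_nonneg_left hsc2 hMpos.le
    calc M / 2 * nrm (z - y) ^ 2 = M * (1 / 2 * nrm (z - y) ^ 2) := by ring
      _ ≤ M * breg d Dd y z := this
  calc ⟪v, w⟫ ≤ Lν * nrm (z - y) ^ ν * nrm w := h3
    _ ≤ M / 2 * nrm (z - y) ^ 2 + M / 2 * nrm w ^ 2 + δ := hkey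
    _ ≤ M * breg d Dd y z + M * breg d Dd z x + δ := by linarith
    _ = M * breg d Dd z x + M * breg d Dd y z + δ := by ring
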